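/- arXiv:2101.00452 — 5 statements merged into one kernel-verified Lean document; each statement's English description precedes it below -/
import Mathlib

section
/- Let γ>1, A₀>0, B₀>0, κ₁>0, κ₂ ≠ 0. There exists a unique r^♯ ∈ (r̃, r₁) (with r̃ = |κ₂|/√(2B₀), provided the incoming data at r₁ satisfies M₁₀ ≠ 1) such that: for every r ∈ (r^♯, r₁) the equation F_r(ρ)=0 has exactly two positive roots ρ⁻(r) < ρ_*(r) < ρ⁺(r); for r = r^♯ it has exactly one positive root ρ_*(r^♯); and for r ∈ (0, r^♯) it has no nonnegative root. -/
open Set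

private lemma rpowCont {p : ℝ} (hp : 0 ≤ p) : Continuous fun x : ℝ => x ^ p := by
  rw [continuous_iff_continuousAt]
  intro x
  exact Real.continuousAt_rpow_const x p (Or.inr hp)

private lemma hasDerivAt_f (γ c b d : ℝ) (hγ : 1 < γ) (x : ℝ) :
    HasDerivAt (fun ρ : ℝ => c * ρ ^ (γ + 1) - b * ρ ^ 2 + d)
      (c * ((γ + 1) * x ^ γ) - b * (2 * x)) x := by
  have h1 : HasDerivAt (fun ρ : ℝ => ρ ^ (γ + 1)) ((γ + 1) * x ^ (γ + 1 - 1)) x :=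
    Real.hasDerivAt_rpow_const (Or.inr (by linarith))
  have h1' : HasDerivAt (fun ρ : ℝ => ρ ^ (γ + 1)) ((γ + 1) * x ^ γ) x := by
    simpa using h1
  have h2 : HasDerivAt (fun ρ : ℝ => ρ ^ 2) (2 * x) x := by
    simpa using (hasDerivAt_pow 2 x)
  exact ((h1'.const_mul c).sub (h2.const_mul b)).add_const d

private lemma cont_f (γ c b d : ℝ) (hγ : 1 < γ) :
    Continuous (fun ρ : ℝ => c * ρ ^ (γ + 1) - b * ρ ^ 2 + d) := by
  have := rpowCont (p := γ + 1) (by linarith)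
  continuity

private lemma rpow_gam (γ x : ℝ) (hγ : 1 < γ) (hx : 0 < x) :
    x ^ γ = x ^ (γ - 1) * x := by
  have h := Real.rpow_add_one hx.ne' (γ - 1)
  have h2 : x ^ γ = x ^ (γ - 1 + 1) := by norm_num
  rw [h2, h]

private lemma f_strictAntiOn (γ c b d s : ℝ) (hγ : 1 < γ) (hc : 0 < c) (hb : 0 < b)
    (hs0 : 0 < s) (hs : c * (γ + 1) * s ^ (γ - 1) = 2 * b) :
    StrictAntiOn (fun ρ : ℝ => c * ρ ^ (γ + 1) - b * ρ ^ 2 + d) (Icc 0 s) := by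
  apply strictAntiOn_of_deriv_neg (convex_Icc 0 s) (cont_f γ c b d hγ).continuousOn
  intro x hx
  rw [interior_Icc] at hx
  rw [(hasDerivAt_f γ c b d hγ x).deriv, rpow_gam γ x hγ hx.1]
  have hlt : x ^ (γ - 1) < s ^ (γ - 1) := Real.rpow_lt_rpow hx.1.le hx.2 (by linarith)
  have key : c * (γ + 1) * x ^ (γ - 1) < 2 * b := by
    calc c * (γ + 1) * x ^ (γ - 1) < c * (γ + 1) * s ^ (γ - 1) := by
          apply mul_lt_mul_of_pos_left hlt; positivity
      _ = 2 * b := hs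
  nlinarith [mul_lt_mul_of_pos_left key hx.1]

private lemma f_strictMonoOn (γ c b d s : ℝ) (hγ : 1 < γ) (hc : 0 < c) (hb : 0 < b)
    (hs0 : 0 < s) (hs : c * (γ + 1) * s ^ (γ - 1) = 2 * b) :
    StrictMonoOn (fun ρ : ℝ => c * ρ ^ (γ + 1) - b * ρ ^ 2 + d) (Ici s) := by
  apply strictMonoOn_of_deriv_pos (convex_Ici s) (cont_f γ c b d hγ).continuousOn
  intro x hx
  rw [interior_Ici] at hx
  have hx0 : 0 < x := lt_trans hs0 hx
  rw [(hasDerivAt_f γ c b d hγ x).deriv, rpow_gam γ x hγ hx0]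
  have hlt : s ^ (γ - 1) < x ^ (γ - 1) := Real.rpow_lt_rpow hs0.le hx (by linarith)
  have key : 2 * b < c * (γ + 1) * x ^ (γ - 1) := by
    calc 2 * b = c * (γ + 1) * s ^ (γ - 1) := hs.symm
      _ < c * (γ + 1) * x ^ (γ - 1) := by
          apply mul_lt_mul_of_pos_left hlt; positivity
  nlinarith [mul_lt_mul_of_pos_left key hx0]

private lemma f_min (γ c b d s : ℝ) (hγ : 1 < γ) (hc : 0 < c) (hb : 0 < b)
    (hs0 : 0 < s) (hs : c * (γ + 1) * s ^ (γ - 1) = 2 * b)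
    (ρ : ℝ) (hρ : 0 ≤ ρ) (hne : ρ ≠ s) :
    c * s ^ (γ + 1) - b * s ^ 2 + d < c * ρ ^ (γ + 1) - b * ρ ^ 2 + d := by
  rcases lt_or_gt_of_ne hne with h | h
  · exact f_strictAntiOn γ c b d s hγ hc hb hs0 hs ⟨hρ, h.le⟩ ⟨le_refl 0 |>.trans hs0.le, le_refl s⟩ h
  · exact f_strictMonoOn γ c b d s hγ hc hb hs0 hs (le_refl s) h.le h

private lemma f_ge (γ c b d s : ℝ) (hγ : 1 < γ) (hc : 0 < c) (hb : 0 < b)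
    (hs0 : 0 < s) (hs : c * (γ + 1) * s ^ (γ - 1) = 2 * b)
    (ρ : ℝ) (hρ : 0 ≤ ρ) :
    c * s ^ (γ + 1) - b * s ^ 2 + d ≤ c * ρ ^ (γ + 1) - b * ρ ^ 2 + d := by
  rcases eq_or_ne ρ s with rfl | h
  · exact le_refl _
  · exact (f_min γ c b d s hγ hc hb hs0 hs ρ hρ h).le

private lemma one_root (γ c b d s : ℝ) (hγ : 1 < γ) (hc : 0 < c) (hb : 0 < b)
    (hs0 : 0 < s) (hs : c * (γ + 1) * s ^ (γ - 1) = 2 * b)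
    (hzero : c * s ^ (γ + 1) - b * s ^ 2 + d = 0) :
    {ρ : ℝ | 0 ≤ ρ ∧ c * ρ ^ (γ + 1) - b * ρ ^ 2 + d = 0} = {s} := by
  ext ρ
  simp only [mem_setOf_eq, mem_singleton_iff]
  constructor
  · rintro ⟨hρ, h0⟩
    by_contra hne
    have := f_min γ c b d s hγ hc hb hs0 hs ρ hρ hne
    rw [hzero, h0] at this
    exact lt_irrefl 0 this
  · rintro rfl
    exact ⟨hs0.le, hzero⟩

private lemma two_roots (γ c b d s : ℝ) (hγ : 1 < γ) (hc : 0 < c) (hb : 0 < b)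
    (hd : 0 < d) (hs0 : 0 < s) (hs : c * (γ + 1) * s ^ (γ - 1) = 2 * b)
    (hneg : c * s ^ (γ + 1) - b * s ^ 2 + d < 0) :
    ∃ ρm ρp : ℝ, ρm < s ∧ s < ρp ∧ 0 < ρm ∧
      {ρ : ℝ | 0 < ρ ∧ c * ρ ^ (γ + 1) - b * ρ ^ 2 + d = 0} = {ρm, ρp} := by
  set f : ℝ → ℝ := fun ρ => c * ρ ^ (γ + 1) - b * ρ ^ 2 + d with hf
  have hcont := cont_f γ c b d hγ
  have hf0 : f 0 = d := by
    simp [hf, Real.zero_rpow (by linarith : γ + 1 ≠ 0)]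
  -- first root in (0, s)
  have h1 : (0 : ℝ) ∈ Ioo (f s) (f 0) := by rw [hf0]; exact ⟨hneg, hd⟩
  obtain ⟨ρm, hρm, hfρm⟩ := intermediate_value_Ioo' hs0.le hcont.continuousOn h1
  -- second root in (s, Y)
  set Y : ℝ := (2 * b / c) ^ ((1:ℝ) / (γ - 1)) with hYdef
  have hY0 : 0 < Y := Real.rpow_pos_of_pos (by positivity) _
  have hYc : Y ^ (γ - 1) = 2 * b / c := by
    rw [hYdef, ← Real.rpow_mul (by positivity), one_div,
      inv_mul_cancel₀ (by linarith : γ - 1 ≠ 0), Real.rpow_one]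
  have hsY : s < Y := by
    by_contra h
    push_neg at h
    have hle : Y ^ (γ - 1) ≤ s ^ (γ - 1) := Real.rpow_le_rpow hY0.le h (by linarith)
    rw [hYc] at hle
    have hsp : 0 < s ^ (γ - 1) := Real.rpow_pos_of_pos hs0 _
    have := mul_le_mul_of_nonneg_left hle hc.le
    rw [mul_div_cancel₀ _ hc.ne'] at this
    nlinarith
  have hfY : f Y = b * Y ^ 2 + d := by
    have hsplit : Y ^ (γ + 1) = Y ^ (γ - 1) * Y ^ (2:ℝ) := by
      rw [← Real.rpow_add hY0]; norm_num
      congr 1; ring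
    rw [hf]
    simp only []
    rw [hsplit, hYc, Real.rpow_two]
    field_simp
    ring
  have h2 : (0 : ℝ) ∈ Ioo (f s) (f Y) := by
    rw [hfY]; exact ⟨hneg, by positivity⟩
  obtain ⟨ρp, hρp, hfρp⟩ := intermediate_value_Ioo hsY.le hcont.continuousOn h2
  refine ⟨ρm, ρp, hρm.2, hρp.1, hρm.1, ?_⟩
  have hanti := f_strictAntiOn γ c b d s hγ hc hb hs0 hs
  have hmono := f_strictMonoOn γ c b d s hγ hc hb hs0 hs
  ext ρ
  simp only [mem_setOf_eq, mem_insert_iff, mem_singleton_iff]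
  constructor
  · rintro ⟨hρ0, h0⟩
    rcases le_or_gt ρ s with hle | hgt
    · left
      exact hanti.injOn ⟨hρ0.le, hle⟩ ⟨hρm.1.le, hρm.2.le⟩ (by simp only at hfρm; rw [h0, hfρm])
    · right
      exact hmono.injOn hgt.le hρp.1.le (by simp only at hfρp; rw [h0, hfρp])
  · rintro (rfl | rfl)
    · exact ⟨hρm.1, by simpa using hfρm⟩
    · exact ⟨hs0.trans hρp.1, by simpa using hfρp⟩

open Set

set_option maxHeartbeats 1000000 in
/-- Lemma 2.5: there exists a unique `r^♯ ∈ (r̃, r₁)` such that `F_r(ρ) = 0`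
has exactly two positive roots `ρ⁻(r) < ρ_*(r) < ρ⁺(r)` for `r ∈ (r^♯, r₁)`, exactly one
nonnegative root `ρ_*(r^♯)` for `r = r^♯`, and no nonnegative root for `r ∈ (0, r^♯)`.
The incoming data at `r₁` is compatible (`F_{r₁}(ρ₀) = 0`) with radial Mach number ≠ 1
(`ρ₀ ≠ ρ_*(r₁)`). -/
theorem stmt4 (γ A₀ B₀ κ₁ κ₂ r₁ ρ₀ : ℝ) (hγ : 1 < γ) (hA : 0 < A₀) (hB : 0 < B₀)
    (hκ₁ : 0 < κ₁) (hκ₂ : κ₂ ≠ 0)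
    (K ρStar : ℝ → ℝ)
    (hK : ∀ r : ℝ, K r = 2 * (γ - 1) / (γ + 1) * B₀ - (γ - 1) / (γ + 1) * κ₂ ^ 2 / r ^ 2)
    (hρStar : ∀ r : ℝ, ρStar r = (K r / (γ * A₀)) ^ ((1 : ℝ) / (γ - 1)))
    (F : ℝ → ℝ → ℝ)
    (hF : ∀ r ρ : ℝ, F r ρ =
      γ / (γ - 1) * A₀ * ρ ^ (γ + 1) - (B₀ - κ₂ ^ 2 / (2 * r ^ 2)) * ρ ^ 2
        + κ₁ ^ 2 / (2 * r ^ 2))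
    (hr₁ : |κ₂| / Real.sqrt (2 * B₀) < r₁)
    (hρ₀pos : 0 < ρ₀) (hcompat : F r₁ ρ₀ = 0) (hMach : ρ₀ ≠ ρStar r₁) :
    ∃! rs : ℝ, (|κ₂| / Real.sqrt (2 * B₀) < rs ∧ rs < r₁) ∧
      ((∀ r : ℝ, rs < r → r < r₁ →
          ∃ ρm ρp : ℝ, ρm < ρStar r ∧ ρStar r < ρp ∧ 0 < ρm ∧
            {ρ : ℝ | 0 < ρ ∧ F r ρ = 0} = {ρm, ρp}) ∧
        {ρ : ℝ | 0 ≤ ρ ∧ F rs ρ = 0} = {ρStar rs} ∧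
        ∀ r : ℝ, 0 < r → r < rs → ∀ ρ : ℝ, 0 ≤ ρ → F r ρ ≠ 0) := by
  have hγ1 : (0:ℝ) < γ - 1 := by linarith
  have hγp : (0:ℝ) < γ := by linarith
  set rt : ℝ := |κ₂| / Real.sqrt (2 * B₀) with hrtdef
  set c : ℝ := γ / (γ - 1) * A₀ with hcdef
  have hc : 0 < c := by rw [hcdef]; positivity
  have hsqpos : 0 < Real.sqrt (2 * B₀) := Real.sqrt_pos.2 (by positivity)
  have hsq : Real.sqrt (2 * B₀) ^ 2 = 2 * B₀ := Real.sq_sqrt (by positivity)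
  have hκ2 : 0 < κ₂ ^ 2 := by positivity
  have habs : 0 < |κ₂| := abs_pos.2 hκ₂
  have hrt0 : 0 < rt := by rw [hrtdef]; positivity
  -- positivity of b(r) for r > rt
  have hbpos : ∀ r : ℝ, rt < r → 0 < B₀ - κ₂ ^ 2 / (2 * r ^ 2) := by
    intro r hr
    have hr0 : 0 < r := hrt0.trans hr
    have h1 : |κ₂| < r * Real.sqrt (2 * B₀) := by
      rw [hrtdef] at hr; exact (div_lt_iff₀ hsqpos).1 hr
    have h2 : κ₂ ^ 2 < r ^ 2 * (2 * B₀) := by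
      have h3 := mul_self_lt_mul_self (abs_nonneg κ₂) h1
      calc κ₂ ^ 2 = |κ₂| * |κ₂| := by rw [abs_mul_abs_self]; ring
        _ < (r * Real.sqrt (2 * B₀)) * (r * Real.sqrt (2 * B₀)) := h3
        _ = r ^ 2 * Real.sqrt (2 * B₀) ^ 2 := by ring
        _ = r ^ 2 * (2 * B₀) := by rw [hsq]
    rw [sub_pos, div_lt_iff₀ (by positivity)]
    nlinarith
  have hbneg : ∀ r : ℝ, 0 < r → r ≤ rt → B₀ - κ₂ ^ 2 / (2 * r ^ 2) ≤ 0 := by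
    intro r hr0 hr
    have h1 : r * Real.sqrt (2 * B₀) ≤ |κ₂| := by
      rw [hrtdef] at hr; exact (le_div_iff₀ hsqpos).1 hr
    have h2 : r ^ 2 * (2 * B₀) ≤ κ₂ ^ 2 := by
      have h3 := mul_self_le_mul_self (by positivity : (0:ℝ) ≤ r * Real.sqrt (2 * B₀)) h1
      calc r ^ 2 * (2 * B₀) = r ^ 2 * Real.sqrt (2 * B₀) ^ 2 := by rw [hsq]
        _ = (r * Real.sqrt (2 * B₀)) * (r * Real.sqrt (2 * B₀)) := by ring
        _ ≤ |κ₂| * |κ₂| := h3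
        _ = κ₂ ^ 2 := by rw [abs_mul_abs_self]; ring
    rw [sub_nonpos, le_div_iff₀ (by positivity)]
    nlinarith
  -- characterization of ρStar
  have hchar : ∀ r : ℝ, rt < r → 0 < ρStar r ∧
      c * (γ + 1) * (ρStar r) ^ (γ - 1) = 2 * (B₀ - κ₂ ^ 2 / (2 * r ^ 2)) := by
    intro r hr
    have hr0 : 0 < r := hrt0.trans hr
    have hb := hbpos r hr
    have hKr : K r = 2 * (γ - 1) / (γ + 1) * (B₀ - κ₂ ^ 2 / (2 * r ^ 2)) := by
      rw [hK]; field_simp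
    have hcoef : 0 < 2 * (γ - 1) / (γ + 1) := div_pos (by linarith) (by linarith)
    have hKpos : 0 < K r := by rw [hKr]; exact mul_pos hcoef hb
    have hxpos : 0 < K r / (γ * A₀) := div_pos hKpos (by positivity)
    have hpos : 0 < ρStar r := by
      rw [hρStar]; exact Real.rpow_pos_of_pos hxpos _
    have hpow : (ρStar r) ^ (γ - 1) = K r / (γ * A₀) := by
      rw [hρStar, ← Real.rpow_mul hxpos.le, one_div,
        inv_mul_cancel₀ hγ1.ne', Real.rpow_one]
    refine ⟨hpos, ?_⟩
    rw [hpow, hKr, hcdef]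
    field_simp
  -- the minimum-value function
  obtain ⟨mf, hmfeq⟩ : ∃ mf : ℝ → ℝ, ∀ r : ℝ, mf r =
      c * (ρStar r) ^ (γ + 1) - (B₀ - κ₂ ^ 2 / (2 * r ^ 2)) * (ρStar r) ^ 2
        + κ₁ ^ 2 / (2 * r ^ 2) := ⟨_, fun r => rfl⟩
  have hmfF : ∀ r : ℝ, mf r = F r (ρStar r) := by
    intro r; rw [hmfeq, hF]
  -- continuity of mf on Icc rt r₁
  have hmcont : ContinuousOn mf (Icc rt r₁) := by
    have hne2 : ∀ r ∈ Icc rt r₁, r ^ 2 ≠ 0 := by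
      intro r hr
      exact pow_ne_zero 2 (hrt0.trans_le hr.1).ne'
    have hne2' : ∀ r ∈ Icc rt r₁, 2 * r ^ 2 ≠ 0 := by
      intro r hr
      have := hne2 r hr
      intro h; apply this; linarith [h]
    have hKc : ContinuousOn (fun r : ℝ =>
        (2 * (γ - 1) / (γ + 1) * B₀ - (γ - 1) / (γ + 1) * κ₂ ^ 2 / r ^ 2) / (γ * A₀))
        (Icc rt r₁) :=
      (continuousOn_const.sub (continuousOn_const.div
        (continuous_pow 2).continuousOn hne2)).div_const _
    have hSc : ContinuousOn (fun r : ℝ =>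
        ((2 * (γ - 1) / (γ + 1) * B₀ - (γ - 1) / (γ + 1) * κ₂ ^ 2 / r ^ 2) / (γ * A₀))
          ^ ((1:ℝ) / (γ - 1))) (Icc rt r₁) :=
      hKc.rpow_const (fun x _ => Or.inr (by positivity))
    have hgc : ContinuousOn (fun r : ℝ =>
        c * (((2 * (γ - 1) / (γ + 1) * B₀ - (γ - 1) / (γ + 1) * κ₂ ^ 2 / r ^ 2) / (γ * A₀))
            ^ ((1:ℝ) / (γ - 1))) ^ (γ + 1)
          - (B₀ - κ₂ ^ 2 / (2 * r ^ 2)) *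
            (((2 * (γ - 1) / (γ + 1) * B₀ - (γ - 1) / (γ + 1) * κ₂ ^ 2 / r ^ 2) / (γ * A₀))
              ^ ((1:ℝ) / (γ - 1))) ^ 2
          + κ₁ ^ 2 / (2 * r ^ 2)) (Icc rt r₁) := by
      apply ContinuousOn.add
      apply ContinuousOn.sub
      · exact continuousOn_const.mul (hSc.rpow_const (fun x _ => Or.inr (by linarith)))
      · exact (continuousOn_const.sub (continuousOn_const.div
          ((continuous_const.mul (continuous_pow 2)).continuousOn) hne2')).mul (hSc.pow 2)
      · exact continuousOn_const.div
          ((continuous_const.mul (continuous_pow 2)).continuousOn) hne2'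
    apply hgc.congr
    intro r _
    rw [hmfeq, hρStar, hK]
  -- strict antitonicity
  have hanti : ∀ r r' : ℝ, rt < r → r < r' → mf r' < mf r := by
    intro r r' hr hrr'
    have hr'rt : rt < r' := hr.trans hrr'
    have hr0 : 0 < r := hrt0.trans hr
    have hr'0 : 0 < r' := hrt0.trans hr'rt
    obtain ⟨hposr, hcharr⟩ := hchar r hr
    obtain ⟨hposr', hcharr'⟩ := hchar r' hr'rt
    have step1 : mf r' ≤ c * (ρStar r) ^ (γ + 1)
        - (B₀ - κ₂ ^ 2 / (2 * r' ^ 2)) * (ρStar r) ^ 2 + κ₁ ^ 2 / (2 * r' ^ 2) := by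
      rw [hmfeq]
      exact f_ge γ c (B₀ - κ₂ ^ 2 / (2 * r' ^ 2)) (κ₁ ^ 2 / (2 * r' ^ 2)) (ρStar r') hγ hc (hbpos r' hr'rt) hposr' hcharr' (ρStar r) hposr.le
    have h1 : κ₂ ^ 2 / (2 * r' ^ 2) < κ₂ ^ 2 / (2 * r ^ 2) :=
      div_lt_div_of_pos_left hκ2 (by positivity) (by nlinarith)
    have h2 : κ₁ ^ 2 / (2 * r' ^ 2) < κ₁ ^ 2 / (2 * r ^ 2) :=
      div_lt_div_of_pos_left (by positivity) (by positivity) (by nlinarith)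
    have step2 : c * (ρStar r) ^ (γ + 1)
        - (B₀ - κ₂ ^ 2 / (2 * r' ^ 2)) * (ρStar r) ^ 2 + κ₁ ^ 2 / (2 * r' ^ 2)
        < mf r := by
      rw [hmfeq]
      nlinarith [mul_nonneg (sub_nonneg.2 h1.le) (sq_nonneg (ρStar r))]
    exact lt_of_le_of_lt step1 step2
  -- mf rt > 0
  have hrt2 : rt ^ 2 = κ₂ ^ 2 / (2 * B₀) := by
    rw [hrtdef, div_pow, sq_abs, hsq]
  have hKrt : K rt = 0 := by
    rw [hK, hrt2]
    field_simp
    ring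
  have hSrt : ρStar rt = 0 := by
    rw [hρStar, hKrt, zero_div, Real.zero_rpow (by positivity : (1:ℝ)/(γ-1) ≠ 0)]
  have hmrt : 0 < mf rt := by
    rw [hmfeq, hSrt, Real.zero_rpow (by linarith : γ + 1 ≠ 0)]
    have : 0 < κ₁ ^ 2 / (2 * rt ^ 2) := by positivity
    simpa using this
  -- mf r₁ < 0
  have hm1 : mf r₁ < 0 := by
    obtain ⟨hpos1, hchar1⟩ := hchar r₁ hr₁
    have hmin := f_min γ c (B₀ - κ₂ ^ 2 / (2 * r₁ ^ 2)) (κ₁ ^ 2 / (2 * r₁ ^ 2)) (ρStar r₁) hγ hc (hbpos r₁ hr₁) hpos1 hchar1 ρ₀ hρ₀pos.le hMach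
    rw [hmfeq]
    calc c * (ρStar r₁) ^ (γ + 1) - (B₀ - κ₂ ^ 2 / (2 * r₁ ^ 2)) * (ρStar r₁) ^ 2
          + κ₁ ^ 2 / (2 * r₁ ^ 2)
        < c * ρ₀ ^ (γ + 1) - (B₀ - κ₂ ^ 2 / (2 * r₁ ^ 2)) * ρ₀ ^ 2
          + κ₁ ^ 2 / (2 * r₁ ^ 2) := hmin
      _ = F r₁ ρ₀ := (hF r₁ ρ₀).symm
      _ = 0 := hcompat
  -- rs via IVT
  obtain ⟨rs, hrsmem, hmrs⟩ := intermediate_value_Ioo' hr₁.le hmcont ⟨hm1, hmrt⟩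
  refine ⟨rs, ⟨⟨hrsmem.1, hrsmem.2⟩, ?_, ?_, ?_⟩, ?_⟩
  · -- two roots for rs < r < r₁
    intro r hrsr hrr₁
    have hrrt : rt < r := hrsmem.1.trans hrsr
    obtain ⟨hposr, hcharr⟩ := hchar r hrrt
    have hbr := hbpos r hrrt
    have hr0 : 0 < r := hrt0.trans hrrt
    have hd : 0 < κ₁ ^ 2 / (2 * r ^ 2) := by positivity
    have hneg : c * (ρStar r) ^ (γ + 1) - (B₀ - κ₂ ^ 2 / (2 * r ^ 2)) * (ρStar r) ^ 2
        + κ₁ ^ 2 / (2 * r ^ 2) < 0 := by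
      have h := hanti rs r hrsmem.1 hrsr
      rw [hmrs, hmfeq] at h
      exact h
    obtain ⟨ρm, ρp, h1, h2, h3, h4⟩ :=
      two_roots γ c (B₀ - κ₂ ^ 2 / (2 * r ^ 2)) (κ₁ ^ 2 / (2 * r ^ 2)) (ρStar r) hγ hc hbr hd hposr hcharr hneg
    refine ⟨ρm, ρp, h1, h2, h3, ?_⟩
    rw [← h4]
    ext ρ
    simp only [mem_setOf_eq]
    rw [hF]
  · -- one root at rs
    obtain ⟨hposs, hchars⟩ := hchar rs hrsmem.1
    have hz : c * (ρStar rs) ^ (γ + 1) - (B₀ - κ₂ ^ 2 / (2 * rs ^ 2)) * (ρStar rs) ^ 2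
        + κ₁ ^ 2 / (2 * rs ^ 2) = 0 := by
      rw [← hmfeq]; exact hmrs
    have hOne := one_root γ c (B₀ - κ₂ ^ 2 / (2 * rs ^ 2)) (κ₁ ^ 2 / (2 * rs ^ 2)) (ρStar rs) hγ hc (hbpos rs hrsmem.1) hposs hchars hz
    rw [← hOne]
    ext ρ
    simp only [mem_setOf_eq]
    rw [hF]
  · -- no roots for 0 < r < rs
    intro r hr0 hrrs ρ hρ h0
    rcases le_or_gt r rt with hle | hgt
    · have hb := hbneg r hr0 hle
      rw [hF] at h0
      have hrp : 0 < κ₁ ^ 2 / (2 * r ^ 2) := by positivity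
      nlinarith [mul_nonneg hc.le (Real.rpow_nonneg hρ (γ + 1)),
        mul_nonneg (neg_nonneg.2 hb) (sq_nonneg ρ)]
    · obtain ⟨hposr, hcharr⟩ := hchar r hgt
      have hge := f_ge γ c (B₀ - κ₂ ^ 2 / (2 * r ^ 2)) (κ₁ ^ 2 / (2 * r ^ 2)) (ρStar r) hγ hc (hbpos r hgt) hposr hcharr ρ hρ
      have hpos : 0 < mf r := by rw [← hmrs]; exact hanti r rs hgt hrrs
      rw [hmfeq] at hpos
      rw [hF] at h0
      linarith
  · -- uniqueness
    rintro rs' ⟨⟨ha1, ha2⟩, _, hset, _⟩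
    have hmem : ρStar rs' ∈ {ρ : ℝ | 0 ≤ ρ ∧ F rs' ρ = 0} := by rw [hset]; rfl
    have hm' : mf rs' = 0 := by rw [hmfF]; exact hmem.2
    rcases lt_trichotomy rs' rs with h | h | h
    · exfalso
      have := hanti rs' rs ha1 h
      rw [hmrs, hm'] at this
      exact lt_irrefl 0 this
    · exact h
    · exfalso
      have := hanti rs rs' hrsmem.1 h
      rw [hmrs, hm'] at this
      exact lt_irrefl 0 this
end

section
/- Let γ>1 and define T₁(x) = (x^γ/(γ+1))·(−(γ−1) + 4γ/((γ+1)x − (γ−1))) for x ∈ ((γ−1)/(γ+1), (γ+1)/(γ−1)). Then T₁ is strictly decreasing on this interval, T₁(1) = 1, and T₁(x) > 1 if and only if x < 1. -/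
open Set

lemma aux_deriv (γ : ℝ) (hγ : 1 < γ) (x : ℝ) (hx : (γ - 1) / (γ + 1) < x) :
    HasDerivAt (fun x : ℝ => x ^ γ / (γ + 1) * (-(γ - 1) + 4 * γ / ((γ + 1) * x - (γ - 1))))
      (-(γ * (γ ^ 2 - 1) * x ^ (γ - 1) * (x - 1) ^ 2 / ((γ + 1) * x - (γ - 1)) ^ 2)) x := by
  have hb : (0:ℝ) < γ + 1 := by linarith
  have ha : (0:ℝ) < γ - 1 := by linarith
  have hx0 : 0 < x := lt_trans (div_pos ha hb) hx
  have hd : 0 < (γ + 1) * x - (γ - 1) := by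
    have := (div_lt_iff₀ hb).mp hx
    linarith [this]
  have hd' : (γ + 1) * x - (γ - 1) ≠ 0 := ne_of_gt hd
  have hpow : HasDerivAt (fun x : ℝ => x ^ γ) (γ * x ^ (γ - 1)) x :=
    Real.hasDerivAt_rpow_const (Or.inl (ne_of_gt hx0))
  have hlin : HasDerivAt (fun x : ℝ => (γ + 1) * x - (γ - 1)) (γ + 1) x := by
    simpa using ((hasDerivAt_id x).const_mul (γ + 1)).sub_const (γ - 1)
  have hinv : HasDerivAt (fun x : ℝ => ((γ + 1) * x - (γ - 1))⁻¹)
      (-(γ + 1) / ((γ + 1) * x - (γ - 1)) ^ 2) x := hlin.inv hd'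
  have hg : HasDerivAt (fun x : ℝ => -(γ - 1) + 4 * γ / ((γ + 1) * x - (γ - 1)))
      (4 * γ * (-(γ + 1) / ((γ + 1) * x - (γ - 1)) ^ 2)) x := by
    have := (hinv.const_mul (4 * γ)).const_add (-(γ - 1))
    simpa [div_eq_mul_inv] using this
  have h := (hpow.div_const (γ + 1)).mul hg
  refine (h.congr_deriv ?_)
  have hsplit : x ^ γ = x ^ (γ - 1) * x := by
    conv_lhs => rw [show γ = (γ - 1) + 1 from by ring]
    rw [Real.rpow_add hx0, Real.rpow_one]
  rw [hsplit]
  field_simp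
  ring

/-- `T₁(x) = (x^γ/(γ+1))(−(γ−1) + 4γ/((γ+1)x − (γ−1)))` is strictly
decreasing on `((γ−1)/(γ+1), (γ+1)/(γ−1))`, `T₁(1) = 1`, and on this interval
`T₁(x) > 1 ↔ x < 1`. -/
theorem stmt6 (γ : ℝ) (hγ : 1 < γ) (T₁ : ℝ → ℝ)
    (hT₁ : ∀ x : ℝ, T₁ x = x ^ γ / (γ + 1) * (-(γ - 1) + 4 * γ / ((γ + 1) * x - (γ - 1)))) :
    StrictAntiOn T₁ (Set.Ioo ((γ - 1) / (γ + 1)) ((γ + 1) / (γ - 1))) ∧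
    T₁ 1 = 1 ∧
    ∀ x ∈ Set.Ioo ((γ - 1) / (γ + 1)) ((γ + 1) / (γ - 1)), (1 < T₁ x ↔ x < 1) := by
  have hfun : T₁ = fun x : ℝ => x ^ γ / (γ + 1) * (-(γ - 1) + 4 * γ / ((γ + 1) * x - (γ - 1))) :=
    funext hT₁
  have hb : (0:ℝ) < γ + 1 := by linarith
  have ha : (0:ℝ) < γ - 1 := by linarith
  set lo := (γ - 1) / (γ + 1) with hlo
  set hi := (γ + 1) / (γ - 1) with hhi
  have hlo1 : lo < 1 := (div_lt_one hb).mpr (by linarith)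
  have hhi1 : 1 < hi := (one_lt_div ha).mpr (by linarith)
  -- derivative negative off 1
  have hderivneg : ∀ x, lo < x → x ≠ 1 → deriv T₁ x < 0 := by
    intro x hx hx1
    rw [hfun, (aux_deriv γ hγ x hx).deriv]
    have hx0 : 0 < x := lt_trans (div_pos ha hb) hx
    have hd : 0 < (γ + 1) * x - (γ - 1) := by
      have := (div_lt_iff₀ hb).mp hx
      linarith
    have h1 : 0 < γ * (γ ^ 2 - 1) * x ^ (γ - 1) * (x - 1) ^ 2 := by
      have : (0:ℝ) < γ ^ 2 - 1 := by nlinarith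
      have hp : 0 < x ^ (γ - 1) := Real.rpow_pos_of_pos hx0 _
      have hne : x - 1 ≠ 0 := sub_ne_zero.mpr hx1
      have hs : 0 < (x - 1) ^ 2 := by positivity
      exact mul_pos (mul_pos (mul_pos (by linarith : (0:ℝ) < γ) this) hp) hs
    have h2 : 0 < ((γ + 1) * x - (γ - 1)) ^ 2 := by positivity
    have := div_pos h1 h2
    linarith
  -- strict anti on left and right pieces
  have hcont : ∀ s : Set ℝ, (∀ x ∈ s, lo < x) → ContinuousOn T₁ s := by
    intro s hs x hx
    exact ((aux_deriv γ hγ x (hs x hx)).continuousAt.continuousWithinAt).congr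
      (fun y _ => hT₁ y) (hT₁ x)
  have hleft : StrictAntiOn T₁ (Set.Ioc lo 1) := by
    apply strictAntiOn_of_deriv_neg (convex_Ioc lo 1)
    · exact hcont _ (fun x hx => hx.1)
    · intro x hx
      rw [interior_Ioc] at hx
      exact hderivneg x hx.1 (ne_of_lt hx.2)
  have hright : StrictAntiOn T₁ (Set.Ico 1 hi) := by
    apply strictAntiOn_of_deriv_neg (convex_Ico 1 hi)
    · exact hcont _ (fun x hx => lt_of_lt_of_le hlo1 hx.1)
    · intro x hx
      rw [interior_Ico] at hx
      exact hderivneg x (lt_trans hlo1 hx.1) (ne_of_gt hx.1)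
  have hanti : StrictAntiOn T₁ (Set.Ioo lo hi) := by
    intro x hx y hy hxy
    rcases le_or_gt y 1 with h | h
    · exact hleft ⟨hx.1, (hxy.trans_le h).le⟩ ⟨hy.1, h⟩ hxy
    · rcases le_or_gt 1 x with h' | h'
      · exact hright ⟨h', hx.2⟩ ⟨h'.trans hxy.le, hy.2⟩ hxy
      · calc T₁ y < T₁ 1 := hright ⟨le_refl 1, hhi1⟩ ⟨h.le, hy.2⟩ h
          _ < T₁ x := hleft ⟨hx.1, h'.le⟩ ⟨hlo1, le_refl 1⟩ h'
  have h1mem : (1:ℝ) ∈ Set.Ioo lo hi := ⟨hlo1, hhi1⟩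
  have hT1 : T₁ 1 = 1 := by
    rw [hT₁ 1, Real.one_rpow]
    rw [show (γ + 1) * 1 - (γ - 1) = 2 by ring]
    field_simp
    ring
  refine ⟨hanti, hT1, fun x hx => ?_⟩
  constructor
  · intro hTx
    by_contra h
    push_neg at h
    rcases eq_or_lt_of_le h with rfl | h
    · rw [hT1] at hTx; exact lt_irrefl 1 hTx
    · have := hanti h1mem hx h
      rw [hT1] at this
      linarith
  · intro hx1
    have := hanti hx h1mem hx1
    rw [hT1] at this
    linarith
end

section
/- Suppose M₁²(r) := (M₁(r))² is a C¹ function on [r₀, r₁) satisfying the ODE (M₁²)'(r) = M₁²(r)/(r(M₁²(r) − 1)) · (2 + (γ−1)M₁²(r) + (γ+1)M₂²(r)) with M₂²(r) ≥ 0, γ > 1, and M₁²(r₀) > 1. Then M₁²(r) > 1 and (M₁²)'(r) > 0 for all r ∈ [r₀, r₁), and moreover M₁²(r) ≥ M₁²(r₀)·(r/r₀)^{γ−1}. -/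
private lemma derivPos (γ x m b : ℝ) (hγ : 1 < γ) (hx : 0 < x) (hm : 1 < m) (hb : 0 ≤ b) :
    0 < m / (x * (m - 1)) * (2 + (γ - 1) * m + (γ + 1) * b) := by
  have h1 : 0 < m / (x * (m - 1)) := div_pos (by linarith) (mul_pos hx (by linarith))
  have h2 : 0 < 2 + (γ - 1) * m + (γ + 1) * b := by nlinarith
  exact mul_pos h1 h2

private lemma derivLB (γ x m b : ℝ) (hγ : 1 < γ) (hx : 0 < x) (hm : 1 < m) (hb : 0 ≤ b) :
    (γ - 1) * m / x ≤ m / (x * (m - 1)) * (2 + (γ - 1) * m + (γ + 1) * b) := by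
  rw [div_mul_eq_mul_div, div_le_div_iff₀ hx (mul_pos hx (by linarith))]
  nlinarith [mul_pos hx (sub_pos.2 hγ), mul_nonneg (mul_nonneg hx.le hb) (by linarith : (0:ℝ) ≤ γ + 1),
    mul_nonneg (mul_nonneg (mul_nonneg hx.le hb) (by linarith : (0:ℝ) ≤ γ + 1)) (by linarith : (0:ℝ) ≤ m)]

/-- If `M₁²` solves `(M₁²)' = M₁²/(r(M₁²−1))·(2+(γ−1)M₁²+(γ+1)M₂²)` on
`[r₀, r₁)` with `M₂² ≥ 0` and `M₁²(r₀) > 1`, then `M₁² > 1` and `(M₁²)' > 0` on `[r₀, r₁)`,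
and `M₁²(r) ≥ M₁²(r₀)(r/r₀)^{γ−1}`. -/
theorem stmt12 (γ r₀ r₁ : ℝ) (hγ : 1 < γ) (hr₀ : 0 < r₀) (hr₀₁ : r₀ < r₁)
    (M1sq M2sq : ℝ → ℝ) (hM2sq : ∀ r : ℝ, 0 ≤ M2sq r)
    (hODE : ∀ r ∈ Set.Ico r₀ r₁,
      HasDerivAt M1sq
        (M1sq r / (r * (M1sq r - 1)) * (2 + (γ - 1) * M1sq r + (γ + 1) * M2sq r)) r)
    (hinit : 1 < M1sq r₀) :
    ∀ r ∈ Set.Ico r₀ r₁,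
      1 < M1sq r ∧ 0 < deriv M1sq r ∧ M1sq r₀ * (r / r₀) ^ (γ - 1) ≤ M1sq r := by
  have hcont : ∀ r ∈ Set.Ico r₀ r₁, ContinuousAt M1sq r := fun r hr => (hODE r hr).continuousAt
  -- Step 1 : M1sq > 1 on the interval
  have key : ∀ r ∈ Set.Ico r₀ r₁, 1 < M1sq r := by
    by_contra h
    push_neg at h
    obtain ⟨t, ht, ht1⟩ := h
    set T := {r ∈ Set.Ico r₀ r₁ | M1sq r ≤ 1} with hT
    have hTne : T.Nonempty := ⟨t, ht, ht1⟩
    have hTbdd : BddBelow T := ⟨r₀, fun x hx => hx.1.1⟩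
    set s := sInf T with hs
    have hr₀s : r₀ ≤ s := le_csInf hTne fun x hx => hx.1.1
    have hst : s ≤ t := csInf_le hTbdd ⟨ht, ht1⟩
    have hs_lt : s < r₁ := lt_of_le_of_lt hst ht.2
    have hsI : s ∈ Set.Ico r₀ r₁ := ⟨hr₀s, hs_lt⟩
    have hlt : ∀ x ∈ Set.Ico r₀ s, 1 < M1sq x := by
      intro x hx
      by_contra hle
      push_neg at hle
      exact absurd (csInf_le hTbdd ⟨⟨hx.1, hx.2.trans hs_lt⟩, hle⟩) (not_le.2 hx.2)
    have hsle : M1sq s ≤ 1 := by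
      by_contra hgt
      push_neg at hgt
      have hev : ∀ᶠ y in nhds s, 1 < M1sq y :=
        continuousAt_const.eventually_lt (hcont s hsI) hgt
      obtain ⟨ε, hε, hball⟩ := Metric.eventually_nhds_iff.mp hev
      obtain ⟨t', ht', ht'lt⟩ := (csInf_lt_iff hTbdd hTne).mp (by linarith : sInf T < s + ε)
      have hst' : s ≤ t' := csInf_le hTbdd ht'
      have : 1 < M1sq t' := hball (by rw [Real.dist_eq, abs_lt]; constructor <;> linarith)
      exact absurd ht'.2 (not_le.2 this)
    have hr₀s' : r₀ < s := lt_of_le_of_ne hr₀s (fun h => by rw [← h] at hsle; linarith)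
    have hmono : StrictMonoOn M1sq (Set.Icc r₀ s) := by
      apply strictMonoOn_of_deriv_pos (convex_Icc _ _)
      · intro x hx
        exact (hcont x ⟨hx.1, lt_of_le_of_lt hx.2 hs_lt⟩).continuousWithinAt
      · intro x hx
        rw [interior_Icc] at hx
        have hx' : x ∈ Set.Ico r₀ r₁ := ⟨hx.1.le, hx.2.trans hs_lt⟩
        have h1 : 1 < M1sq x := hlt x ⟨hx.1.le, hx.2⟩
        rw [(hODE x hx').deriv]
        exact derivPos γ x _ _ hγ (lt_of_lt_of_le hr₀ hx.1.le) h1 (hM2sq x)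
    have := hmono (Set.left_mem_Icc.2 hr₀s) (Set.right_mem_Icc.2 hr₀s) hr₀s'
    linarith
  -- Step 2 : the conclusion
  intro r hr
  have hrpos : 0 < r := lt_of_lt_of_le hr₀ hr.1
  refine ⟨key r hr, ?_, ?_⟩
  · rw [(hODE r hr).deriv]
    exact derivPos γ r _ _ hγ hrpos (key r hr) (hM2sq r)
  · -- growth bound via monotonicity of φ x = M1sq x * x ^ (-(γ-1))
    set p : ℝ := γ - 1 with hp
    have hppos : 0 < p := by simp [hp]; linarith
    set φ : ℝ → ℝ := fun x => M1sq x * x ^ (-p) with hφ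
    have hIcc_sub : Set.Icc r₀ r ⊆ Set.Ico r₀ r₁ := fun x hx => ⟨hx.1, lt_of_le_of_lt hx.2 hr.2⟩
    have hφderiv : ∀ x ∈ Set.Icc r₀ r,
        HasDerivAt φ
          (M1sq x / (x * (M1sq x - 1)) * (2 + (γ - 1) * M1sq x + (γ + 1) * M2sq x) * x ^ (-p)
            + M1sq x * (-p * x ^ (-p - 1))) x := by
      intro x hx
      have hx0 : 0 < x := lt_of_lt_of_le hr₀ hx.1
      exact (hODE x (hIcc_sub hx)).mul (Real.hasDerivAt_rpow_const (Or.inl hx0.ne'))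
    have hφmono : MonotoneOn φ (Set.Icc r₀ r) := by
      apply monotoneOn_of_deriv_nonneg (convex_Icc _ _)
      · intro x hx
        exact ((hφderiv x hx).continuousAt).continuousWithinAt
      · intro x hx
        rw [interior_Icc] at hx
        exact ((hφderiv x (Set.mem_Icc_of_Ioo hx)).differentiableAt).differentiableWithinAt
      · intro x hx
        rw [interior_Icc] at hx
        have hx' : x ∈ Set.Icc r₀ r := Set.mem_Icc_of_Ioo hx
        have hx0 : 0 < x := lt_of_lt_of_le hr₀ hx'.1
        rw [(hφderiv x hx').deriv]
        have hA : (0:ℝ) < x ^ (-p) := Real.rpow_pos_of_pos hx0 _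
        have h1 : 1 < M1sq x := key x (hIcc_sub hx')
        have hlb : (γ - 1) * M1sq x / x ≤
            M1sq x / (x * (M1sq x - 1)) * (2 + (γ - 1) * M1sq x + (γ + 1) * M2sq x) :=
          derivLB γ x _ _ hγ hx0 h1 (hM2sq x)
        have hpow : x ^ (-p - 1) = x ^ (-p) / x := by
          rw [show (-p - 1 : ℝ) = -p - 1 from rfl, Real.rpow_sub hx0, Real.rpow_one]
        rw [hpow]
        have hmul := mul_le_mul_of_nonneg_right hlb hA.le
        have hzero : (γ - 1) * M1sq x / x * x ^ (-p) + M1sq x * (-p * (x ^ (-p) / x)) = 0 := by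
          rw [hp]; ring
        linarith
    have hstep : φ r₀ ≤ φ r :=
      hφmono (Set.left_mem_Icc.2 hr.1) (Set.right_mem_Icc.2 hr.1) hr.1
    have hA0 : (0:ℝ) < r₀ ^ p := Real.rpow_pos_of_pos hr₀ _
    have hA1 : (0:ℝ) < r ^ p := Real.rpow_pos_of_pos hrpos _
    have hstep' : M1sq r₀ / r₀ ^ p ≤ M1sq r / r ^ p := by
      have e1 : φ r₀ = M1sq r₀ / r₀ ^ p := by
        simp [hφ, Real.rpow_neg hr₀.le, div_eq_mul_inv]
      have e2 : φ r = M1sq r / r ^ p := by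
        simp [hφ, Real.rpow_neg hrpos.le, div_eq_mul_inv]
      rwa [e1, e2] at hstep
    rw [div_le_div_iff₀ hA0 hA1] at hstep'
    rw [Real.div_rpow hrpos.le hr₀.le, ← mul_div_assoc, div_le_iff₀ hA0]
    linarith
end

section
/- Suppose (M₁², |M|²) are C¹ functions on [r₀, r₁) satisfying (M₁²)' = M₁²/(r(M₁² − 1))·(2 + (γ−1)M₁² + (γ+1)(|M|² − M₁²)) and (|M|²)' = |M|²/(r(M₁² − 1))·(2 + (γ−1)|M|²), with γ > 1, 0 ≤ M₁²(r₀) ≤ |M|²(r₀) < 1. Then M₁²(r) < 1 and |M|²(r) < 1 for all r ∈ [r₀, r₁), and |M|²(r) ≤ r₀²|M|²(r₀)/r². -/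
open Set Filter Topology

/-- Sign preservation for a scalar linear ODE `x' = h x`. -/
lemma sign_pres13 {x h : ℝ → ℝ} {a b : ℝ}
    (hx : ∀ s ∈ Set.Icc a b, HasDerivAt x (h s * x s) s)
    (hh : ContinuousOn h (Set.Icc a b)) (h0 : 0 ≤ x a) :
    ∀ s ∈ Set.Icc a b, 0 ≤ x s := by
  intro s hs
  by_contra hneg
  push_neg at hneg
  have hxc : ContinuousOn x (Set.Icc a b) :=
    fun u hu => (hx u hu).continuousAt.continuousWithinAt
  obtain ⟨K, hK⟩ := isCompact_Icc.exists_bound_of_continuousOn hh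
  have hsub : Set.Icc a s ⊆ Set.Icc a b := Set.Icc_subset_Icc_right hs.2
  have h0mem : (0:ℝ) ∈ Set.Icc (x s) (x a) := ⟨le_of_lt hneg, h0⟩
  obtain ⟨T, hT, hxT⟩ := intermediate_value_Icc' hs.1 (hxc.mono hsub) h0mem
  have hTs : Set.Icc T s ⊆ Set.Icc a b := Set.Icc_subset_Icc hT.1 hs.2
  have hg := norm_le_gronwallBound_of_norm_deriv_right_le
    (f := x) (f' := fun u => h u * x u) (δ := 0) (K := K) (ε := 0) (a := T) (b := s)
    (hxc.mono hTs)
    (fun u hu => (hx u (hTs ⟨hu.1, le_of_lt hu.2⟩)).hasDerivWithinAt)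
    (by simp [hxT])
    (fun u hu => by
      have hub : u ∈ Set.Icc a b := hTs ⟨hu.1, le_of_lt hu.2⟩
      have hKu := hK u hub
      calc ‖h u * x u‖ = ‖h u‖ * ‖x u‖ := norm_mul _ _
        _ ≤ K * ‖x u‖ + 0 := by
            nlinarith [norm_nonneg (x u), norm_nonneg (h u)])
    s ⟨hT.2, le_refl s⟩
  rw [gronwallBound_ε0] at hg
  simp at hg
  have : x s = 0 := by simpa using norm_le_zero_iff.mp (by simpa using hg)
  linarith

lemma anti_of_deriv13 {f f' : ℝ → ℝ} {a b : ℝ}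
    (hf : ∀ s ∈ Set.Icc a b, HasDerivAt f (f' s) s)
    (hf' : ∀ s ∈ Set.Icc a b, f' s ≤ 0) : AntitoneOn f (Set.Icc a b) := by
  apply antitoneOn_of_deriv_nonpos (convex_Icc a b)
    (fun u hu => (hf u hu).continuousAt.continuousWithinAt)
  · intro s hs
    rw [interior_Icc] at hs
    exact (hf s (Set.Ioo_subset_Icc_self hs)).differentiableAt.differentiableWithinAt
  · intro s hs
    rw [interior_Icc] at hs
    rw [(hf s (Set.Ioo_subset_Icc_self hs)).deriv]
    exact hf' s (Set.Ioo_subset_Icc_self hs)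

/-- If `(M₁², |M|²)` solve
`(M₁²)' = M₁²/(r(M₁²−1))·(2+(γ−1)M₁²+(γ+1)(|M|²−M₁²))` and
`(|M|²)' = |M|²/(r(M₁²−1))·(2+(γ−1)|M|²)` on `[r₀, r₁)` with
`0 ≤ M₁²(r₀) ≤ |M|²(r₀) < 1`, then `M₁² < 1` and `|M|² < 1` on `[r₀, r₁)` and
`|M|²(r) ≤ r₀²|M|²(r₀)/r²`. -/
theorem stmt13 (γ r₀ r₁ : ℝ) (hγ : 1 < γ) (hr₀ : 0 < r₀) (hr₀₁ : r₀ < r₁)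
    (M1sq Msq : ℝ → ℝ)
    (hODE1 : ∀ r ∈ Set.Ico r₀ r₁,
      HasDerivAt M1sq
        (M1sq r / (r * (M1sq r - 1)) *
          (2 + (γ - 1) * M1sq r + (γ + 1) * (Msq r - M1sq r))) r)
    (hODE2 : ∀ r ∈ Set.Ico r₀ r₁,
      HasDerivAt Msq (Msq r / (r * (M1sq r - 1)) * (2 + (γ - 1) * Msq r)) r)
    (hinit0 : 0 ≤ M1sq r₀) (hinit1 : M1sq r₀ ≤ Msq r₀) (hinit2 : Msq r₀ < 1) :
    ∀ r ∈ Set.Ico r₀ r₁,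
      M1sq r < 1 ∧ Msq r < 1 ∧ Msq r ≤ r₀ ^ 2 * Msq r₀ / r ^ 2 := by
  have key : ∀ b ∈ Set.Ico r₀ r₁, ∀ s ∈ Set.Icc r₀ b,
      0 ≤ M1sq s ∧ M1sq s ≤ Msq s ∧ Msq s ≤ Msq r₀ := by
    intro b hb
    have hsub : Set.Icc r₀ b ⊆ Set.Ico r₀ r₁ :=
      fun s hs => ⟨hs.1, lt_of_le_of_lt hs.2 hb.2⟩
    set S : Set ℝ := {c | c ∈ Set.Icc r₀ b ∧ ∀ s ∈ Set.Icc r₀ c,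
      0 ≤ M1sq s ∧ M1sq s ≤ Msq s ∧ Msq s ≤ Msq r₀} with hSdef
    have hr₀S : r₀ ∈ S := by
      refine ⟨⟨le_refl _, hb.1⟩, fun s hs => ?_⟩
      have : s = r₀ := le_antisymm hs.2 hs.1
      rw [this]; exact ⟨hinit0, hinit1, le_refl _⟩
    have hbdd : BddAbove S := ⟨b, fun c hc => hc.1.2⟩
    have hne : S.Nonempty := ⟨r₀, hr₀S⟩
    set T := sSup S with hTdef
    have hTmem : T ∈ Set.Icc r₀ b := ⟨le_csSup hbdd hr₀S, csSup_le hne (fun c hc => hc.1.2)⟩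
    have hTI : T ∈ Set.Ico r₀ r₁ := hsub hTmem
    have hPlt : ∀ s, r₀ ≤ s → s < T →
        0 ≤ M1sq s ∧ M1sq s ≤ Msq s ∧ Msq s ≤ Msq r₀ := by
      intro s hs1 hs2
      obtain ⟨c, hcS, hsc⟩ := exists_lt_of_lt_csSup hne hs2
      exact hcS.2 s ⟨hs1, le_of_lt hsc⟩
    have hPT : 0 ≤ M1sq T ∧ M1sq T ≤ Msq T ∧ Msq T ≤ Msq r₀ := by
      rcases eq_or_lt_of_le hTmem.1 with h | h
      · rw [← h]; exact ⟨hinit0, hinit1, le_refl _⟩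
      · haveI : (𝓝[Set.Ico r₀ T] T).NeBot := by
          apply mem_closure_iff_nhdsWithin_neBot.mp
          rw [closure_Ico (ne_of_lt h)]
          exact ⟨le_of_lt h, le_refl _⟩
        have hM1t : Filter.Tendsto M1sq (𝓝[Set.Ico r₀ T] T) (𝓝 (M1sq T)) :=
          ((hODE1 T hTI).continuousAt.tendsto).mono_left nhdsWithin_le_nhds
        have hMt : Filter.Tendsto Msq (𝓝[Set.Ico r₀ T] T) (𝓝 (Msq T)) :=
          ((hODE2 T hTI).continuousAt.tendsto).mono_left nhdsWithin_le_nhds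
        have hev : ∀ᶠ s in 𝓝[Set.Ico r₀ T] T,
            0 ≤ M1sq s ∧ M1sq s ≤ Msq s ∧ Msq s ≤ Msq r₀ :=
          eventually_mem_nhdsWithin.mono (fun s hs => hPlt s hs.1 hs.2)
        exact ⟨ge_of_tendsto hM1t (hev.mono fun s hs => hs.1),
          le_of_tendsto_of_tendsto hM1t hMt (hev.mono fun s hs => hs.2.1),
          le_of_tendsto hMt (hev.mono fun s hs => hs.2.2)⟩
    have hTS : T ∈ S := by
      refine ⟨hTmem, fun s hs => ?_⟩
      rcases eq_or_lt_of_le hs.2 with h | h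
      · rw [h]; exact hPT
      · exact hPlt s hs.1 h
    have hTb : T = b := by
      by_contra hne'
      have hTb : T < b := lt_of_le_of_ne hTmem.2 hne'
      have hM1T1 : M1sq T < 1 := lt_of_le_of_lt (le_trans hPT.2.1 hPT.2.2) hinit2
      have hev1 : ∀ᶠ s in 𝓝 T, M1sq s < 1 :=
        (hODE1 T hTI).continuousAt.eventually_lt_const hM1T1
      obtain ⟨δ, hδ, hball⟩ := Metric.eventually_nhds_iff.mp hev1
      set ε := min (δ/2) (b - T) with hεdef
      have hε : 0 < ε := lt_min (by linarith) (by linarith)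
      have hεδ : ε ≤ δ/2 := min_le_left _ _
      have hεb : T + ε ≤ b := by
        have := min_le_right (δ/2) (b - T); simp only [← hεdef] at this; linarith
      have hJsub : Set.Icc T (T+ε) ⊆ Set.Icc r₀ b := Set.Icc_subset_Icc hTmem.1 hεb
      have hJI : Set.Icc T (T+ε) ⊆ Set.Ico r₀ r₁ := fun s hs => hsub (hJsub hs)
      have hM1lt : ∀ s ∈ Set.Icc T (T+ε), M1sq s < 1 := by
        intro s hs
        apply hball
        rw [Real.dist_eq, abs_of_nonneg (by linarith [hs.1])]
        linarith [hs.2]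
      have hden : ∀ s ∈ Set.Icc T (T+ε), s * (M1sq s - 1) < 0 := by
        intro s hs
        have hs0 : 0 < s := lt_of_lt_of_le hr₀ (hJsub hs).1
        have := hM1lt s hs
        exact mul_neg_of_pos_of_neg hs0 (by linarith)
      have hM1cJ : ContinuousOn M1sq (Set.Icc T (T+ε)) :=
        fun u hu => (hODE1 u (hJI hu)).continuousAt.continuousWithinAt
      have hMcJ : ContinuousOn Msq (Set.Icc T (T+ε)) :=
        fun u hu => (hODE2 u (hJI hu)).continuousAt.continuousWithinAt
      have hcden : ContinuousOn (fun s => s * (M1sq s - 1)) (Set.Icc T (T+ε)) :=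
        continuousOn_id.mul (hM1cJ.sub continuousOn_const)
      have hdenne : ∀ s ∈ Set.Icc T (T+ε), s * (M1sq s - 1) ≠ 0 :=
        fun s hs => ne_of_lt (hden s hs)
      -- (i) M1sq ≥ 0
      have hM1nonneg : ∀ s ∈ Set.Icc T (T+ε), 0 ≤ M1sq s := by
        apply sign_pres13
          (h := fun s => (2 + (γ-1)*M1sq s + (γ+1)*(Msq s - M1sq s)) / (s * (M1sq s - 1)))
        · intro s hs
          have h := hODE1 s (hJI hs)
          convert h using 1
          ring
        · exact ContinuousOn.div
            ((continuousOn_const.add (continuousOn_const.mul hM1cJ)).add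
              (continuousOn_const.mul (hMcJ.sub hM1cJ))) hcden hdenne
        · exact hPT.1
      -- (ii) Msq - M1sq ≥ 0
      have hDnonneg : ∀ s ∈ Set.Icc T (T+ε), 0 ≤ Msq s - M1sq s := by
        apply sign_pres13
          (h := fun s => (2 + (γ-1)*(Msq s + M1sq s) - (γ+1)*M1sq s) / (s * (M1sq s - 1)))
        · intro s hs
          have h : HasDerivAt (fun s => Msq s - M1sq s) (Msq s / (s * (M1sq s - 1)) * (2 + (γ - 1) * Msq s) - M1sq s / (s * (M1sq s - 1)) *
              (2 + (γ - 1) * M1sq s + (γ + 1) * (Msq s - M1sq s))) s :=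
            (hODE2 s (hJI hs)).sub (hODE1 s (hJI hs))
          convert h using 1
          have hs0 : s ≠ 0 := ne_of_gt (lt_of_lt_of_le hr₀ (hJsub hs).1)
          have hm1 : M1sq s - 1 ≠ 0 := by
            have := hM1lt s hs; intro hc; rw [sub_eq_zero] at hc; linarith
          ring
        · exact ContinuousOn.div
            ((continuousOn_const.add (continuousOn_const.mul (hMcJ.add hM1cJ))).sub
              (continuousOn_const.mul hM1cJ)) hcden hdenne
        · linarith [hPT.2.1]
      -- (iii) Msq antitone on J
      have hManti : AntitoneOn Msq (Set.Icc T (T+ε)) := by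
        apply anti_of_deriv13
          (f' := fun s => Msq s / (s * (M1sq s - 1)) * (2 + (γ-1)*Msq s))
        · intro s hs; exact hODE2 s (hJI hs)
        · intro s hs
          have hM0 : 0 ≤ Msq s := by linarith [hM1nonneg s hs, hDnonneg s hs]
          have hd := hden s hs
          have hq : Msq s / (s * (M1sq s - 1)) ≤ 0 :=
            div_nonpos_of_nonneg_of_nonpos hM0 (le_of_lt hd)
          exact mul_nonpos_of_nonpos_of_nonneg hq (by nlinarith)
      have hTε : T + ε ∈ S := by
        refine ⟨⟨by linarith [hTmem.1], hεb⟩, fun s hs => ?_⟩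
        rcases le_or_gt s T with h | h
        · exact hTS.2 s ⟨hs.1, h⟩
        · have hsJ : s ∈ Set.Icc T (T+ε) := ⟨le_of_lt h, hs.2⟩
          refine ⟨hM1nonneg s hsJ, by linarith [hDnonneg s hsJ], ?_⟩
          have : Msq s ≤ Msq T := hManti ⟨le_refl T, by linarith⟩ hsJ hsJ.1
          exact le_trans this hPT.2.2
      have : T + ε ≤ T := by rw [hTdef]; exact le_csSup hbdd hTε
      linarith
    intro s hs
    exact hTS.2 s ⟨hs.1, hTb ▸ hs.2⟩
  -- final conclusions
  intro r hr
  have hPall := key r hr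
  have hPr := hPall r ⟨hr.1, le_refl r⟩
  have hMr1 : Msq r < 1 := lt_of_le_of_lt hPr.2.2 hinit2
  have hM1r1 : M1sq r < 1 := lt_of_le_of_lt hPr.2.1 hMr1
  refine ⟨hM1r1, hMr1, ?_⟩
  have hsubr : Set.Icc r₀ r ⊆ Set.Ico r₀ r₁ := fun s hs => ⟨hs.1, lt_of_le_of_lt hs.2 hr.2⟩
  have hwanti : AntitoneOn (fun s => s^2 * Msq s) (Set.Icc r₀ r) := by
    apply anti_of_deriv13
      (f' := fun s => 2*s*Msq s + s^2 * (Msq s / (s*(M1sq s - 1)) * (2 + (γ-1)*Msq s)))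
    · intro s hs
      have h : HasDerivAt (fun s => s^2 * Msq s) (((2:ℕ):ℝ) * s^(2-1) * Msq s + s^2 * (Msq s / (s*(M1sq s - 1)) * (2 + (γ-1)*Msq s))) s :=
        (hasDerivAt_pow 2 s).mul (hODE2 s (hsubr hs))
      convert h using 1
      push_cast
      ring
    · intro s hs
      have hP := hPall s hs
      have hs0 : 0 < s := lt_of_lt_of_le hr₀ hs.1
      have hM1 : M1sq s - 1 < 0 := by
        have := lt_of_le_of_lt hP.2.2 hinit2; linarith [hP.2.1]
      have hM0 : 0 ≤ Msq s := le_trans hP.1 hP.2.1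
      have heq : 2*s*Msq s + s^2 * (Msq s / (s*(M1sq s - 1)) * (2 + (γ-1)*Msq s))
          = s * Msq s * (2*M1sq s + (γ-1)*Msq s) / (M1sq s - 1) := by
        field_simp [ne_of_gt hs0, ne_of_lt hM1]
        ring
      rw [heq]
      apply div_nonpos_of_nonneg_of_nonpos
      · have h2 : 0 ≤ 2*M1sq s + (γ-1)*Msq s := by nlinarith [hP.1]
        exact mul_nonneg (mul_nonneg hs0.le hM0) h2
      · linarith
  have hw : r^2 * Msq r ≤ r₀^2 * Msq r₀ :=
    hwanti ⟨le_refl r₀, hr.1⟩ ⟨hr.1, le_refl r⟩ hr.1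
  have hr0r : 0 < r := lt_of_lt_of_le hr₀ hr.1
  have hr2 : (0:ℝ) < r^2 := by positivity
  rw [le_div_iff₀ hr2]
  linarith
end

section
/- Let γ>1, B₀>0, κ₂ ≠ 0, and suppose x : (r_*, ∞) → ℝ satisfies x(r) > 1 and x'(r) > 0 for all r, where r_* = √(γκ₂²/((γ−1)B₀)). Define f₁(r) = (1 − ((γ+1)/(γ−1))·a(r))·x(r) with a(r) = κ₂²/(2r²B₀ − κ₂²). Then f₁'(r) > 0 on (r_*, ∞). If additionally x(r) ≥ C·r^{γ−1} for some C > 0 and all large r, then f₁(r) → ∞ as r → ∞, and since f₁(r_*) = 0 there exists a unique r'_* > r_* with f₁(r'_*) = 1. -/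
/-- With `x(r) > 1`, `x'(r) > 0` on `(r_*, ∞)` (`r_* = √(γκ₂²/((γ−1)B₀))`),
`f₁(r) = (1 − ((γ+1)/(γ−1))a(r))x(r)` with `a(r) = κ₂²/(2r²B₀ − κ₂²)` satisfies
`f₁' > 0` on `(r_*, ∞)`; if moreover `x(r) ≥ C r^{γ−1}` for large `r`, then `f₁ → ∞` at
infinity and there is a unique `r'_* > r_*` with `f₁(r'_*) = 1`. -/
theorem stmt16 (γ B₀ κ₂ : ℝ) (hγ : 1 < γ) (hB : 0 < B₀) (hκ₂ : κ₂ ≠ 0)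
    (rstar : ℝ) (hrstar : rstar = Real.sqrt (γ * κ₂ ^ 2 / ((γ - 1) * B₀)))
    (x f₁ : ℝ → ℝ)
    (hx1 : ∀ r : ℝ, rstar < r → 1 < x r)
    (hxdiff : ∀ r : ℝ, rstar < r → DifferentiableAt ℝ x r)
    (hx' : ∀ r : ℝ, rstar < r → 0 < deriv x r)
    (hf₁ : ∀ r : ℝ, f₁ r =
      (1 - (γ + 1) / (γ - 1) * (κ₂ ^ 2 / (2 * r ^ 2 * B₀ - κ₂ ^ 2))) * x r) :
    (∀ r : ℝ, rstar < r → 0 < deriv f₁ r) ∧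
    ((∃ C : ℝ, 0 < C ∧ ∀ᶠ r in Filter.atTop, C * r ^ (γ - 1) ≤ x r) →
      (Filter.Tendsto f₁ Filter.atTop Filter.atTop ∧
        ∃! r' : ℝ, rstar < r' ∧ f₁ r' = 1)) := by
  have hγ1 : (0:ℝ) < γ - 1 := by linarith
  have hκsq : (0:ℝ) < κ₂ ^ 2 := by positivity
  set c : ℝ := (γ + 1) / (γ - 1) with hc
  have hcpos : 0 < c := by
    apply div_pos <;> linarith
  set D : ℝ → ℝ := fun r => 2 * r ^ 2 * B₀ - κ₂ ^ 2 with hD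
  set g : ℝ → ℝ := fun r => 1 - c * κ₂ ^ 2 * (D r)⁻¹ with hg
  have hfg : f₁ = fun r => g r * x r := by
    funext r
    rw [hf₁ r, hg, hD, hc]
    ring
  -- rstar facts
  have hrs2pos : (0:ℝ) < γ * κ₂ ^ 2 / ((γ - 1) * B₀) := by positivity
  have hrspos : 0 < rstar := by
    rw [hrstar]; exact Real.sqrt_pos.2 hrs2pos
  have hrs2 : rstar ^ 2 = γ * κ₂ ^ 2 / ((γ - 1) * B₀) := by
    rw [hrstar, Real.sq_sqrt hrs2pos.le]
  have hDstar : D rstar = c * κ₂ ^ 2 := by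
    rw [hD, hc]
    simp only
    rw [hrs2]
    field_simp
    ring
  -- For r > rstar
  have hDgt : ∀ r : ℝ, rstar < r → c * κ₂ ^ 2 < D r := by
    intro r hr
    have h2 : rstar ^ 2 < r ^ 2 := by
      exact pow_lt_pow_left₀ hr hrspos.le (by norm_num)
    have : D rstar < D r := by
      simp only [hD]
      nlinarith
    rw [hDstar] at this
    exact this
  have hDpos : ∀ r : ℝ, rstar < r → 0 < D r := fun r hr =>
    lt_trans (by positivity) (hDgt r hr)
  have hgpos : ∀ r : ℝ, rstar < r → 0 < g r := by
    intro r hr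
    have h1 : c * κ₂ ^ 2 * (D r)⁻¹ < 1 := by
      rw [mul_inv_lt_iff₀ (hDpos r hr), one_mul]
      exact hDgt r hr
    simp only [hg]
    linarith
  -- derivative of g
  have hgD : ∀ r : ℝ, rstar < r →
      HasDerivAt g (c * κ₂ ^ 2 * (4 * r * B₀) / (D r) ^ 2) r := by
    intro r hr
    have hDd : HasDerivAt D (4 * r * B₀) r := by
      have h1 := (((hasDerivAt_pow 2 r).const_mul 2).mul_const B₀).sub_const (κ₂ ^ 2)
      refine h1.congr_deriv ?_
      norm_num
      left; ring
    have h2 := (hDd.inv (hDpos r hr).ne').const_mul (c * κ₂ ^ 2)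
    have h3 := h2.const_sub 1
    refine h3.congr_deriv ?_
    ring
  -- derivative of f₁
  have hf₁D : ∀ r : ℝ, rstar < r →
      HasDerivAt f₁ (c * κ₂ ^ 2 * (4 * r * B₀) / (D r) ^ 2 * x r + g r * deriv x r) r := by
    intro r hr
    rw [hfg]
    exact (hgD r hr).mul (hxdiff r hr).hasDerivAt
  have part1 : ∀ r : ℝ, rstar < r → 0 < deriv f₁ r := by
    intro r hr
    rw [(hf₁D r hr).deriv]
    have hr0 : 0 < r := lt_trans hrspos hr
    have t1 : 0 < c * κ₂ ^ 2 * (4 * r * B₀) / (D r) ^ 2 * x r := by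
      apply mul_pos
      · apply div_pos
        · apply mul_pos (by positivity) (by positivity)
        · exact pow_pos (hDpos r hr) 2
      · linarith [hx1 r hr]
    have t2 : 0 < g r * deriv x r := mul_pos (hgpos r hr) (hx' r hr)
    exact add_pos t1 t2
  refine ⟨part1, ?_⟩
  rintro ⟨C, hC, hCev⟩
  -- monotonicity facts
  have hcont : ∀ r : ℝ, rstar < r → ContinuousAt f₁ r := fun r hr =>
    (hf₁D r hr).differentiableAt.continuousAt
  have hmono : StrictMonoOn f₁ (Set.Ioi rstar) := by
    apply strictMonoOn_of_deriv_pos (convex_Ioi rstar)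
    · exact fun r hr => (hcont r hr).continuousWithinAt
    · intro r hr
      rw [interior_Ioi] at hr
      exact part1 r hr
  have hxmono : StrictMonoOn x (Set.Ioi rstar) := by
    apply strictMonoOn_of_deriv_pos (convex_Ioi rstar)
    · exact fun r hr => (hxdiff r hr).continuousAt.continuousWithinAt
    · intro r hr
      rw [interior_Ioi] at hr
      exact hx' r hr
  set r₀ : ℝ := rstar + 1 with hr₀def
  have hr₀ : rstar < r₀ := by simp [hr₀def]
  have hgmono : ∀ r : ℝ, r₀ ≤ r → g r₀ ≤ g r := by
    intro r hrr
    have hr : rstar < r := lt_of_lt_of_le hr₀ hrr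
    have hDle : D r₀ ≤ D r := by
      have h2 : r₀ ^ 2 ≤ r ^ 2 :=
        pow_le_pow_left₀ (le_of_lt (lt_trans hrspos hr₀)) hrr 2
      simp only [hD]
      nlinarith
    have : (D r)⁻¹ ≤ (D r₀)⁻¹ :=
      inv_anti₀ (hDpos r₀ hr₀) hDle
    simp only [hg]
    nlinarith [mul_pos hcpos hκsq]
  -- tendsto
  have hg₀ : 0 < g r₀ := hgpos r₀ hr₀
  have hten : Filter.Tendsto f₁ Filter.atTop Filter.atTop := by
    have hbig : Filter.Tendsto (fun r : ℝ => g r₀ * C * r ^ (γ - 1))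
        Filter.atTop Filter.atTop :=
      (tendsto_rpow_atTop hγ1).const_mul_atTop (mul_pos hg₀ hC)
    apply Filter.tendsto_atTop_mono' _ _ hbig
    filter_upwards [hCev, Filter.eventually_ge_atTop r₀] with r hxr hrr
    have hr : rstar < r := lt_of_lt_of_le hr₀ hrr
    have hxpos : 0 < x r := lt_trans one_pos (hx1 r hr)
    calc g r₀ * C * r ^ (γ - 1) = g r₀ * (C * r ^ (γ - 1)) := by ring
      _ ≤ g r₀ * x r := by
          exact mul_le_mul_of_nonneg_left hxr hg₀.le
      _ ≤ g r * x r := mul_le_mul_of_nonneg_right (hgmono r hrr) hxpos.le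
      _ = f₁ r := by rw [hfg]
  refine ⟨hten, ?_⟩
  -- find r₁ near rstar with f₁ r₁ < 1
  set M : ℝ := x r₀ with hM
  have hMpos : 0 < M := lt_trans one_pos (hx1 r₀ hr₀)
  have hgcont : ContinuousAt g rstar := by
    have hDc : Continuous D := by
      simp only [hD]; fun_prop
    have hDne : D rstar ≠ 0 := by
      rw [hDstar]; positivity
    exact continuousAt_const.sub
      (continuousAt_const.mul (hDc.continuousAt.inv₀ hDne))
  have hgstar : g rstar = 0 := by
    simp only [hg, hDstar]
    field_simp
    norm_num
  have hgt0 : Filter.Tendsto g (nhdsWithin rstar (Set.Ioi rstar)) (nhds 0) := by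
    rw [← hgstar]
    exact (hgcont.continuousWithinAt).tendsto
  have hev : ∀ᶠ r in nhdsWithin rstar (Set.Ioi rstar),
      g r < M⁻¹ ∧ r ∈ Set.Ioo rstar r₀ := by
    refine Filter.Eventually.and ?_ ?_
    · exact hgt0.eventually_lt_const (by positivity)
    · exact Filter.eventually_mem_set.2 (Ioo_mem_nhdsGT_of_mem ⟨le_refl _, hr₀⟩)
  obtain ⟨r₁, hgr₁, hr₁o⟩ := hev.exists
  have hr₁ : rstar < r₁ := hr₁o.1
  have hf₁r₁ : f₁ r₁ < 1 := by
    have h1 : x r₁ ≤ M := le_of_lt (hxmono hr₁ hr₀ hr₁o.2)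
    have h2 : f₁ r₁ = g r₁ * x r₁ := by rw [hfg]
    have h3 : g r₁ * x r₁ ≤ g r₁ * M :=
      mul_le_mul_of_nonneg_left h1 (hgpos r₁ hr₁).le
    have h4 : g r₁ * M < M⁻¹ * M := mul_lt_mul_of_pos_right hgr₁ hMpos
    rw [inv_mul_cancel₀ hMpos.ne'] at h4
    linarith
  -- find r₂ large with f₁ r₂ > 1
  obtain ⟨r₂, hf₁r₂, hr₂⟩ :=
    ((hten.eventually_gt_atTop 1).and (Filter.eventually_ge_atTop r₀)).exists
  have hr₁r₂ : r₁ ≤ r₂ := le_of_lt (lt_of_lt_of_le hr₁o.2 hr₂)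
  have hsub : Set.Icc r₁ r₂ ⊆ Set.Ioi rstar := fun s hs =>
    lt_of_lt_of_le hr₁ hs.1
  have hcontOn : ContinuousOn f₁ (Set.Icc r₁ r₂) := fun s hs =>
    (hcont s (hsub hs)).continuousWithinAt
  have h1mem : (1:ℝ) ∈ Set.Icc (f₁ r₁) (f₁ r₂) := ⟨hf₁r₁.le, hf₁r₂.le⟩
  obtain ⟨r', hr'mem, hr'eq⟩ := intermediate_value_Icc hr₁r₂ hcontOn h1mem
  have hr'gt : rstar < r' := hsub hr'mem
  refine ⟨r', ⟨hr'gt, hr'eq⟩, ?_⟩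
  rintro s ⟨hs, hseq⟩
  exact hmono.injOn hs hr'gt (by rw [hseq, hr'eq])
end
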